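/- Suppose each u_i : ℝ^J → ℝ ∪ {−∞} is upper semicontinuous and concave with u_i(x⁰_i) finite, and Assumption R holds: whenever ∑_i x_i = 0 and u_i^∞(x_i) ≥ 0 for all i, then x = 0, where u_i^∞(y) := inf_{α>0} (u_i(x⁰_i + α·y) − u_i(x⁰_i))/α. Then the set C := {x ∈ (ℝ^J)^I : ∑_i x_i = ∑_i x⁰_i and u_i(x_i) ≥ u_i(x⁰_i) for all i} is bounded. -/
import Mathlib


open scoped BigOperators
open Metric Filter

noncomputable section

/-- The inner product `p·y = ∑ j, p j * y j`. -/
def dotp {J : Type*} [Fintype J] (p y : EuclideanSpace ℝ J) : ℝ := ∑ j, p j * y j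

/-- A function `u : ℝ^J → ℝ ∪ {±∞}` is concave iff its hypograph is convex. -/
def HypoConcave {J : Type*} [Fintype J] (u : EuclideanSpace ℝ J → EReal) : Prop :=
  Convex ℝ {q : EuclideanSpace ℝ J × ℝ | (q.2 : EReal) ≤ u q.1}

/-- Indifference price function `D(x) = sup {r ∈ ℝ : u(x⁰ + x − r·g) ≥ u(x⁰)}`,
the supremum being taken in `ℝ ∪ {±∞}`. -/
def indiff {J : Type*} [Fintype J] (u : EuclideanSpace ℝ J → EReal)
    (x0 g x : EuclideanSpace ℝ J) : EReal :=
  sSup {e : EReal | ∃ r : ℝ, e = (r : EReal) ∧ u x0 ≤ u (x0 + x - r • g)}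

/-- `p` is a supergradient of `D` at `xb`: `D xb` is finite and
`D x ≤ D xb + p·(x − xb)` for all `x`. -/
def IsSupergradient {J : Type*} [Fintype J] (D : EuclideanSpace ℝ J → EReal)
    (p xb : EuclideanSpace ℝ J) : Prop :=
  D xb ≠ ⊥ ∧ D xb ≠ ⊤ ∧ ∀ x, D x ≤ D xb + ((dotp p (x - xb) : ℝ) : EReal)

/-- Optimal value `v(z)` of the perturbed market clearing problem `(P_z)`. -/
def marketValue {I J : Type*} [Fintype I] [Fintype J]
    (D : I → EuclideanSpace ℝ J → EReal) (z : EuclideanSpace ℝ J) : EReal :=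
  sSup {e : EReal | ∃ x : I → EuclideanSpace ℝ J, (∑ i, x i) = z ∧ e = ∑ i, D i (x i)}

/-- Optimal value of problem `(P')`, the total consumer surplus at allocation `w`. -/
def CSval {I J : Type*} [Fintype I] [Fintype J]
    (u : I → EuclideanSpace ℝ J → EReal) (g : EuclideanSpace ℝ J)
    (w : I → EuclideanSpace ℝ J) : EReal :=
  sSup {e : EReal | ∃ s : ℝ, e = (s : EReal) ∧ ∃ z : I → EuclideanSpace ℝ J,
    (∑ i, z i) + s • g = ∑ i, w i ∧ ∀ i, u i (w i) ≤ u i (z i)}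

/-- Recession function `u^∞(y) = inf_{α>0} (u(x⁰ + α·y) − u(x⁰))/α`. -/
def recession {J : Type*} [Fintype J] (u : EuclideanSpace ℝ J → EReal)
    (x0 y : EuclideanSpace ℝ J) : EReal :=
  sInf {e : EReal | ∃ α : ℝ, 0 < α ∧ e = (u (x0 + α • y) - u x0) / (α : EReal)}

/-- Pareto efficiency of an allocation `x` with total endowment `∑ i, x i`. -/
def ParetoEfficient {I J : Type*} [Fintype I] [Fintype J]
    (u : I → EuclideanSpace ℝ J → EReal) (x : I → EuclideanSpace ℝ J) : Prop :=
  ¬ ∃ x' : I → EuclideanSpace ℝ J, (∑ i, x' i) = (∑ i, x i) ∧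
      (∀ i, u i (x i) ≤ u i (x' i)) ∧ ∃ i, u i (x i) < u i (x' i)

/-- under Assumption R the set of individually rational feasible
allocations is bounded. -/
theorem rational_feasible_set_bounded
    {I J : Type*} [Fintype I] [Nonempty I] [Fintype J] [Nonempty J]
    (u : I → EuclideanSpace ℝ J → EReal)
    (x0 : I → EuclideanSpace ℝ J)
    (husc : ∀ i, UpperSemicontinuous (u i))
    (hconc : ∀ i, HypoConcave (u i))
    (hne_top : ∀ i x, u i x ≠ ⊤)
    (hfin : ∀ i, u i (x0 i) ≠ ⊥)
    (hrec : ∀ x : I → EuclideanSpace ℝ J, (∑ i, x i) = 0 →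
      (∀ i, 0 ≤ recession (u i) (x0 i) (x i)) → x = 0) :
    Bornology.IsBounded
      {x : I → EuclideanSpace ℝ J |
        (∑ i, x i) = (∑ i, x0 i) ∧ ∀ i, u i (x0 i) ≤ u i (x i)} := by
  have hconc' : ∀ i, Convex ℝ {q : EuclideanSpace ℝ J × ℝ | (q.2 : EReal) ≤ u i q.1} :=
    hconc
  have hrec' : ∀ x : I → EuclideanSpace ℝ J, (∑ i, x i) = 0 →
      (∀ i, 0 ≤ sInf {e : EReal | ∃ α : ℝ, 0 < α ∧
        e = (u i (x0 i + α • x i) - u i (x0 i)) / (α : EReal)}) → x = 0 := by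
    intro x h1 h2
    exact hrec x h1 (by intro i; rw [recession]; exact h2 i)
  clear hconc hrec
  rename' hconc' => hconc, hrec' => hrec
  by_contra hub
  rw [isBounded_iff_forall_norm_le] at hub
  push_neg at hub
  choose X hX hXnorm using fun n : ℕ => hub ((n : ℝ) + ‖x0‖)
  set t : ℕ → ℝ := fun n => ‖X n - x0‖ with ht_def
  have ht : ∀ n : ℕ, (n : ℝ) < t n := by
    intro n
    have h1 : ‖X n‖ - ‖x0‖ ≤ t n := norm_sub_norm_le _ _
    have := hXnorm n
    linarith
  have htpos : ∀ n, 0 < t n := fun n => lt_of_le_of_lt (Nat.cast_nonneg n) (ht n)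
  set d : ℕ → (I → EuclideanSpace ℝ J) := fun n => (t n)⁻¹ • (X n - x0) with hd_def
  have hdnorm : ∀ n, d n ∈ Metric.sphere (0 : I → EuclideanSpace ℝ J) 1 := by
    intro n
    rw [mem_sphere_zero_iff_norm]
    simp only [hd_def, norm_smul, Real.norm_eq_abs, abs_inv,
      abs_of_pos (htpos n)]
    exact inv_mul_cancel₀ (htpos n).ne'
  obtain ⟨dl, hdl_mem, φ, hφ, hconv⟩ :=
    (isCompact_sphere (0 : I → EuclideanSpace ℝ J) 1).tendsto_subseq hdnorm
  have hcomp : ∀ i, Tendsto (fun k => d (φ k) i) atTop (nhds (dl i)) :=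
    fun i => tendsto_pi_nhds.mp hconv i
  -- component sums vanish
  have hdsum : ∀ n, (∑ i, d n i) = 0 := by
    intro n
    simp only [hd_def, Pi.smul_apply, Pi.sub_apply, ← Finset.smul_sum,
      Finset.sum_sub_distrib, (hX n).1, sub_self, smul_zero]
  have hsum : (∑ i, dl i) = 0 := by
    have h1 : Tendsto (fun k => ∑ i, d (φ k) i) atTop (nhds (∑ i, dl i)) :=
      tendsto_finset_sum _ fun i _ => hcomp i
    have h2 : Tendsto (fun k => ∑ i, d (φ k) i) atTop (nhds 0) := by
      simp only [hdsum]; exact tendsto_const_nhds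
    exact tendsto_nhds_unique h1 h2
  -- recession nonneg
  have hrecnn : ∀ i, 0 ≤ sInf {e : EReal | ∃ α : ℝ, 0 < α ∧
      e = (u i (x0 i + α • dl i) - u i (x0 i)) / (α : EReal)} := by
    intro i
    apply le_sInf
    rintro e ⟨α, hα, rfl⟩
    set r0 : ℝ := (u i (x0 i)).toReal with hr0_def
    have hr0 : (r0 : EReal) = u i (x0 i) := EReal.coe_toReal (hne_top i _) (hfin i)
    have hkey : (r0 : EReal) ≤ u i (x0 i + α • dl i) := by
      by_contra hlt
      push_neg at hlt
      have husc' := husc i (x0 i + α • dl i) (r0 : EReal) hlt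
      have hy : Tendsto (fun k => x0 i + α • d (φ k) i) atTop
          (nhds (x0 i + α • dl i)) :=
        tendsto_const_nhds.add ((hcomp i).const_smul α)
      have hev : ∀ᶠ k in atTop, u i (x0 i + α • d (φ k) i) < (r0 : EReal) :=
        hy.eventually husc'
      obtain ⟨k, hk1, hk2⟩ :=
        (hev.and (eventually_ge_atTop (Nat.ceil α))).exists
      -- convexity gives the reverse
      set n := φ k with hn
      have hαt : α < t n := by
        calc α ≤ (Nat.ceil α : ℝ) := Nat.le_ceil α
        _ ≤ (k : ℝ) := by exact_mod_cast hk2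
        _ ≤ (n : ℝ) := by exact_mod_cast hφ.le_apply
        _ < t n := ht n
      set lam : ℝ := α / t n with hlam_def
      have hlam0 : 0 < lam := div_pos hα (htpos n)
      have hlam1 : lam < 1 := (div_lt_one (htpos n)).mpr hαt
      have hm1 : ((x0 i, r0) : EuclideanSpace ℝ J × ℝ) ∈
          {q : EuclideanSpace ℝ J × ℝ | (q.2 : EReal) ≤ u i q.1} := le_of_eq hr0
      have hm2 : ((X n i, r0) : EuclideanSpace ℝ J × ℝ) ∈
          {q : EuclideanSpace ℝ J × ℝ | (q.2 : EReal) ≤ u i q.1} :=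
        hr0.le.trans ((hX n).2 i)
      have hcomb := hconc i hm1 hm2 (by linarith : (0:ℝ) ≤ 1 - lam)
        hlam0.le (by ring)
      simp only [Prod.smul_mk, Prod.mk_add_mk, smul_eq_mul, Set.mem_setOf_eq] at hcomb
      have heq1 : (1 - lam) * r0 + lam * r0 = r0 := by ring
      rw [heq1] at hcomb
      have heq2 : (1 - lam) • x0 i + lam • X n i = x0 i + α • d n i := by
        have : α • d n i = lam • (X n i - x0 i) := by
          simp only [hd_def, Pi.smul_apply, Pi.sub_apply, hlam_def, smul_smul,
            div_eq_mul_inv]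
        rw [this]
        module
      rw [heq2] at hcomb
      exact absurd hcomb (not_le.mpr hk1)
    -- now conclude nonnegativity
    set a := u i (x0 i + α • dl i) with ha_def
    have hane : a ≠ ⊥ := fun h => by simp [h] at hkey
    have hane' : a ≠ ⊤ := hne_top i _
    obtain ⟨s, hs⟩ : ∃ s : ℝ, a = (s : EReal) :=
      ⟨a.toReal, (EReal.coe_toReal hane' hane).symm⟩
    have hrs : r0 ≤ s := by
      rw [hs] at hkey; exact_mod_cast hkey
    rw [hs, ← hr0, ← EReal.coe_sub]
    exact EReal.div_nonneg (by exact_mod_cast sub_nonneg.mpr hrs)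
      (by exact_mod_cast hα.le)
  have hd0 := hrec dl hsum hrecnn
  rw [mem_sphere_zero_iff_norm, hd0, norm_zero] at hdl_mem
  exact one_ne_zero hdl_mem.symm
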